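/- Let G be a weighted undirected graph with nonnegative weights, and let π(u,v) be a shortest u–v path in G ∪ G^(k) with the minimum number of edges, written as (u = x_0, x_1, …, x_ℓ = v). Then for any index i with 0 ≤ i ≤ ℓ/4 − 1, the sets S[k](x_{4i}) and S[k](x_{4i+4}) are disjoint. -/

import Mathlib

open scoped ENNReal

namespace Stmt1

variable {V : Type*}

/-- Endpoint of a walk starting at `u` with subsequent vertices given by the list. -/
def last : V → List V → V
  | u, [] => u
  | _, x :: xs => last x xs

/-- Weight of a walk starting at `u` with subsequent vertices given by the list. -/
noncomputable def cost (w : V → V → ℝ≥0∞) : V → List V → ℝ≥0∞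
  | _, [] => 0
  | u, x :: xs => w u x + cost w x xs

/-- `h`-hop-limited distance from `u` to `v` (non-edges have weight `⊤`). -/
noncomputable def hdist (w : V → V → ℝ≥0∞) (h : ℕ) (u v : V) : ℝ≥0∞ :=
  ⨅ p ∈ {p : List V | p.length ≤ h ∧ last u p = v}, cost w u p

/-- Shortest-path distance from `u` to `v`. -/
noncomputable def dist (w : V → V → ℝ≥0∞) (u v : V) : ℝ≥0∞ :=
  ⨅ h : ℕ, hdist w h u v

/-- `S` is a set of (at most) `k` closest reachable vertices to `v` (excluding `v`),
with ties broken arbitrarily: members of `S` are reachable and distinct from `v`,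
`|S| ≤ k`, every member is at least as close as every reachable non-member, and `S`
has exactly `k` elements unless it already contains all reachable vertices. -/
def IsKClosest [Fintype V] (w : V → V → ℝ≥0∞) (k : ℕ) (v : V) (S : Finset V) : Prop :=
  (∀ u ∈ S, u ≠ v ∧ dist w v u < ⊤) ∧ S.card ≤ k ∧
  (∀ y ∈ S, ∀ z, z ∉ S → z ≠ v → dist w v z < ⊤ → dist w v y ≤ dist w v z) ∧
  (∀ z, z ∉ S → z ≠ v → dist w v z < ⊤ → S.card = k)

/-- Weight function of the union `G ∪ G^(k)` of the graph with the `k`-shortcut hopset: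
hopset edges `(u,v)` (present when `u ∈ S v` or `v ∈ S u`) get weight `d_G(u,v)`. -/
noncomputable def unionW [Fintype V] [DecidableEq V] (w : V → V → ℝ≥0∞) (S : V → Finset V)
    (u v : V) : ℝ≥0∞ :=
  if u ∈ S v ∨ v ∈ S u then min (w u v) (dist w u v) else w u v


lemma last_append (u : V) (p q : List V) : last u (p ++ q) = last (last u p) q := by
  induction p generalizing u with
  | nil => rfl
  | cons x xs ih => simpa [last] using ih x

lemma cost_append (w : V → V → ℝ≥0∞) (u : V) (p q : List V) :
    cost w u (p ++ q) = cost w u p + cost w (last u p) q := by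
  induction p generalizing u with
  | nil => simp [cost, last]
  | cons x xs ih => simp [cost, last, ih, add_assoc]

lemma dist_le_cost (w : V → V → ℝ≥0∞) {u v : V} {p : List V} (h : last u p = v) :
    dist w u v ≤ cost w u p := by
  refine le_trans (iInf_le _ p.length) ?_
  exact iInf₂_le p ⟨le_rfl, h⟩

lemma dist_le_weight (w : V → V → ℝ≥0∞) (u v : V) : dist w u v ≤ w u v := by
  have := dist_le_cost w (u := u) (v := v) (p := [v]) rfl
  simpa [cost] using this

lemma dist_triangle (w : V → V → ℝ≥0∞) (u x v : V) :
    dist w u v ≤ dist w u x + dist w x v := by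
  have key : ∀ h1 h2 : ℕ, dist w u v ≤ hdist w h1 u x + hdist w h2 x v := by
    intro h1 h2
    rw [hdist, hdist, iInf_subtype', iInf_subtype', ENNReal.iInf_add]
    refine le_iInf fun p => ?_
    rw [ENNReal.add_iInf]
    refine le_iInf fun q => ?_
    have hp := p.2.2
    have hq := q.2.2
    calc dist w u v ≤ cost w u (p.1 ++ q.1) := by
          refine dist_le_cost w ?_
          rw [last_append, hp, hq]
      _ = cost w u p.1 + cost w x q.1 := by rw [cost_append, hp]
  calc dist w u v ≤ ⨅ h1 : ℕ, ⨅ h2 : ℕ, hdist w h1 u x + hdist w h2 x v :=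
        le_iInf fun h1 => le_iInf fun h2 => key h1 h2
    _ = dist w u x + dist w x v := by
        rw [dist, dist, ENNReal.iInf_add]
        exact iInf_congr fun h1 => by rw [ENNReal.add_iInf]

lemma rev_walk (w : V → V → ℝ≥0∞) (hsymm : ∀ u v, w u v = w v u) :
    ∀ (p : List V) (u : V), cost w (last u p) ((u :: p).reverse.tail) = cost w u p ∧
      last (last u p) ((u :: p).reverse.tail) = u := by
  intro p
  induction p with
  | nil => intro u; simp [last, cost]
  | cons x xs ih =>
    intro u
    have hne : (x :: xs).reverse ≠ [] := by simp
    have htail : ((u :: x :: xs).reverse).tail = (x :: xs).reverse.tail ++ [u] := by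
      rw [List.reverse_cons]
      exact List.tail_append_of_ne_nil hne
    have ihx := ih x
    constructor
    · rw [show last u (x :: xs) = last x xs from rfl, htail, cost_append, ihx.1, ihx.2]
      simp [cost, hsymm x u, add_comm]
    · rw [show last u (x :: xs) = last x xs from rfl, htail, last_append, ihx.2]
      rfl

lemma dist_symm (w : V → V → ℝ≥0∞) (hsymm : ∀ u v, w u v = w v u) (u v : V) :
    dist w u v = dist w v u := by
  have key : ∀ a b : V, dist w a b ≤ dist w b a := by
    intro a b
    simp only [dist, hdist]
    refine le_iInf fun h => le_iInf₂ fun p hp => ?_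
    obtain ⟨-, hlast⟩ := hp
    have := rev_walk w hsymm p b
    rw [hlast] at this
    calc dist w a b ≤ cost w a ((b :: p).reverse.tail) := dist_le_cost w this.2
      _ = cost w b p := this.1
  exact le_antisymm (key u v) (key v u)

lemma dist_le_cost_mono {w w' : V → V → ℝ≥0∞} (hle : ∀ x y, dist w x y ≤ w' x y) :
    ∀ (p : List V) (u : V), dist w u (last u p) ≤ cost w' u p := by
  intro p
  induction p with
  | nil =>
    intro u
    have : dist w u u ≤ 0 := by simpa [cost] using dist_le_cost w (u := u) (v := u) (p := []) rfl
    simpa [last, cost] using this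
  | cons x xs ih =>
    intro u
    calc dist w u (last u (x :: xs)) ≤ dist w u x + dist w x (last x xs) :=
          dist_triangle w u x (last x xs)
      _ ≤ w' u x + cost w' x xs := add_le_add (hle u x) (ih x)
      _ = cost w' u (x :: xs) := rfl

lemma getD_eq_last_take : ∀ (p : List V) (u d : V) (n : ℕ), n ≤ p.length →
    (u :: p).getD n d = last u (p.take n) := by
  intro p
  induction p with
  | nil => intro u d n hn; simp [Nat.le_zero.mp hn, last]
  | cons x xs ih =>
    intro u d n hn
    cases n with
    | zero => simp [last]
    | succ m =>
      have hm : m ≤ xs.length := by simp only [List.length_cons] at hn; omega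
      simp only [List.take_succ_cons]
      rw [show ((u :: x :: xs).getD (m+1) d) = (x :: xs).getD m d from rfl]
      rw [ih x d m hm]
      rfl


/-- Along a minimum-weight path in `G ∪ G^(k)` with the fewest edges, the sets of
`k` closest vertices of `x_{4i}` and of `x_{4i+4}` are disjoint. -/
theorem disjoint_kclosest [Fintype V] [DecidableEq V]
    (w : V → V → ℝ≥0∞) (hsymm : ∀ u v, w u v = w v u)
    (k : ℕ) (hk : 1 ≤ k)
    (S : V → Finset V) (hS : ∀ v, IsKClosest w k v (S v))
    (u v : V) (p : List V)
    (hlast : last u p = v)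
    (hfin : cost (unionW w S) u p < ⊤)
    (hmincost : cost (unionW w S) u p = dist (unionW w S) u v)
    (hminhops : ∀ q : List V, last u q = v →
      cost (unionW w S) u q = cost (unionW w S) u p → p.length ≤ q.length)
    (i : ℕ) (hi : 4 * i + 4 ≤ p.length) :
    Disjoint (S ((u :: p).getD (4 * i) u)) (S ((u :: p).getD (4 * i + 4) u)) := by
  classical
  set W := unionW w S with hWdef
  have hWge : ∀ x y, dist w x y ≤ W x y := by
    intro x y
    rw [hWdef]
    unfold unionW
    split
    · exact le_min (dist_le_weight w x y) le_rfl
    · exact dist_le_weight w x y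
  set a := 4 * i with ha
  have ha4 : a + 4 ≤ p.length := hi
  set p1 := p.take a with hp1
  set seg1 := (p.drop a).take 2 with hseg1
  set seg2 := (p.drop (a+2)).take 2 with hseg2
  set rest := p.drop (a+4) with hrest
  set A := last u p1 with hA
  set M := last A seg1 with hM
  set B := last M seg2 with hB
  have ht2 : p.take (a+2) = p1 ++ seg1 := List.take_add (l := p) (i := a) (j := 2)
  have ht4 : p.take (a+4) = (p1 ++ seg1) ++ seg2 := by
    rw [show a+4 = (a+2)+2 by omega, List.take_add (l := p) (i := a+2) (j := 2), ht2]
  have hsplit : p = ((p1 ++ seg1) ++ seg2) ++ rest := by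
    rw [hrest, ← ht4, List.take_append_drop]
  have lastM : last u (p1 ++ seg1) = M := by rw [last_append, ← hA, ← hM]
  have lastB : last u ((p1 ++ seg1) ++ seg2) = B := by rw [last_append, lastM, ← hB]
  have hv2 : last M (p.drop (a+2)) = v := by
    rw [← hlast]
    conv_rhs => rw [← List.take_append_drop (a+2) p]
    rw [last_append, ht2, lastM]
  have hv4 : last B rest = v := by
    rw [← hlast]
    conv_rhs => rw [← List.take_append_drop (a+4) p]
    rw [last_append, ht4, lastB, hrest]
  have gA : (u :: p).getD a u = A := by
    rw [getD_eq_last_take p u u a (by omega), hA, hp1]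
  have gB : (u :: p).getD (a+4) u = B := by
    rw [getD_eq_last_take p u u (a+4) (by omega), ht4, lastB]
  have costp : cost W u p
      = ((cost W u p1 + cost W A seg1) + cost W M seg2) + cost W B rest := by
    conv_lhs => rw [hsplit]
    rw [cost_append, cost_append, cost_append, ← hA, lastM, lastB]
  have costp2 : cost W u p
      = (cost W u p1 + cost W A seg1) + cost W M (p.drop (a+2)) := by
    conv_lhs => rw [← List.take_append_drop (a+2) p]
    rw [cost_append, ht2, lastM, cost_append, ← hA]
  have contra : ∀ q : List V, last u q = v → cost W u q ≤ cost W u p →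
      q.length < p.length → False := by
    intro q hq hcq hlq
    have h1 : dist W u v ≤ cost W u q := dist_le_cost W hq
    have h2 : cost W u q = cost W u p := le_antisymm hcq (by rw [hmincost]; exact h1)
    have := hminhops q hq h2
    omega
  have hAM : dist w A M ≤ cost W A seg1 := by
    have h := dist_le_cost_mono hWge seg1 A
    rwa [← hM] at h
  have hMB : dist w M B ≤ cost W M seg2 := by
    have h := dist_le_cost_mono hWge seg2 M
    rwa [← hB] at h
  have hseg1cost : cost W A seg1 ≤ cost W u p := by
    rw [costp]
    calc cost W A seg1 ≤ cost W u p1 + cost W A seg1 := le_add_self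
      _ ≤ (cost W u p1 + cost W A seg1) + cost W M seg2 := le_self_add
      _ ≤ _ := le_self_add
  have hseg2cost : cost W M seg2 ≤ cost W u p := by
    rw [costp]
    calc cost W M seg2 ≤ (cost W u p1 + cost W A seg1) + cost W M seg2 := le_add_self
      _ ≤ _ := le_self_add
  have finAM : dist w A M < ⊤ := (hAM.trans hseg1cost).trans_lt hfin
  have finMB : dist w M B < ⊤ := (hMB.trans hseg2cost).trans_lt hfin
  -- Case: shortcut edge A–M exists
  by_cases hMSA : M ∈ S A
  · exfalso
    refine contra (p1 ++ M :: p.drop (a+2)) ?_ ?_ ?_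
    · rw [last_append, ← hA]; exact hv2
    · rw [cost_append, ← hA, costp2]
      have h1 : cost W A (M :: p.drop (a+2)) = W A M + cost W M (p.drop (a+2)) := rfl
      have hWAM : W A M ≤ cost W A seg1 := by
        have hcond : A ∈ S M ∨ M ∈ S A := Or.inr hMSA
        have h2 : W A M ≤ dist w A M := by
          rw [hWdef]; unfold unionW; rw [if_pos hcond]; exact min_le_right _ _
        exact h2.trans hAM
      rw [h1, ← add_assoc]
      exact add_le_add (add_le_add le_rfl hWAM) le_rfl
    · simp only [hp1, List.length_append, List.length_cons, List.length_take,
        List.length_drop]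
      omega
  -- Case: shortcut edge M–B exists
  by_cases hMSB : M ∈ S B
  · exfalso
    refine contra ((p1 ++ seg1) ++ B :: rest) ?_ ?_ ?_
    · rw [last_append, lastM]; exact hv4
    · rw [cost_append, lastM, cost_append, ← hA, costp]
      have h1 : cost W M (B :: rest) = W M B + cost W B rest := rfl
      have hWMB : W M B ≤ cost W M seg2 := by
        have hcond : M ∈ S B ∨ B ∈ S M := Or.inl hMSB
        have h2 : W M B ≤ dist w M B := by
          rw [hWdef]; unfold unionW; rw [if_pos hcond]; exact min_le_right _ _
        exact h2.trans hMB
      rw [h1, ← add_assoc]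
      exact add_le_add (add_le_add le_rfl hWMB) le_rfl
    · simp only [hp1, hseg1, hrest, List.length_append, List.length_cons,
        List.length_take, List.length_drop]
      omega
  -- Case: M = A, remove the two edges between them
  by_cases hMA : M = A
  · exfalso
    refine contra (p1 ++ p.drop (a+2)) ?_ ?_ ?_
    · rw [last_append, ← hA, ← hMA]; exact hv2
    · rw [cost_append, ← hA, costp2, ← hMA]
      exact add_le_add le_self_add le_rfl
    · simp only [hp1, List.length_append, List.length_take, List.length_drop]
      omega
  -- Case: M = B
  by_cases hMB' : M = B
  · exfalso
    refine contra ((p1 ++ seg1) ++ rest) ?_ ?_ ?_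
    · rw [last_append, lastM, hMB']; exact hv4
    · rw [cost_append, lastM, cost_append, ← hA, costp, hMB']
      exact add_le_add le_self_add le_rfl
    · simp only [hp1, hseg1, hrest, List.length_append, List.length_take,
        List.length_drop]
      omega
  -- Main case
  rw [gA, gB]
  by_contra hnd
  obtain ⟨z, hzA, hzB⟩ := Finset.not_disjoint_iff.mp hnd
  obtain ⟨-, -, h3A, -⟩ := hS A
  obtain ⟨-, -, h3B, -⟩ := hS B
  have finBM : dist w B M < ⊤ := by
    rw [dist_symm w hsymm B M]; exact finMB
  have dzA : dist w A z ≤ dist w A M := h3A z hzA M hMSA hMA finAM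
  have dzB : dist w B z ≤ dist w B M := h3B z hzB M hMSB hMB' finBM
  have hWAz : W A z ≤ dist w A z := by
    have hcond : A ∈ S z ∨ z ∈ S A := Or.inr hzA
    rw [hWdef]; unfold unionW; rw [if_pos hcond]; exact min_le_right _ _
  have hWzB : W z B ≤ dist w B z := by
    have hcond : z ∈ S B ∨ B ∈ S z := Or.inl hzB
    have h2 : W z B ≤ dist w z B := by
      rw [hWdef]; unfold unionW; rw [if_pos hcond]; exact min_le_right _ _
    rwa [dist_symm w hsymm z B] at h2
  have key : W A z + W z B ≤ cost W A seg1 + cost W M seg2 := by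
    calc W A z + W z B ≤ dist w A z + dist w B z := add_le_add hWAz hWzB
      _ ≤ dist w A M + dist w B M := add_le_add dzA dzB
      _ = dist w A M + dist w M B := by rw [dist_symm w hsymm B M]
      _ ≤ cost W A seg1 + cost W M seg2 := add_le_add hAM hMB
  refine contra (p1 ++ z :: B :: rest) ?_ ?_ ?_
  · rw [last_append, ← hA]; exact hv4
  · rw [cost_append, ← hA, costp]
    have hc : cost W A (z :: B :: rest) = (W A z + W z B) + cost W B rest := by
      simp [cost, add_assoc]
    rw [hc]
    calc cost W u p1 + ((W A z + W z B) + cost W B rest)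
        = (cost W u p1 + (W A z + W z B)) + cost W B rest := (add_assoc _ _ _).symm
      _ ≤ (cost W u p1 + (cost W A seg1 + cost W M seg2)) + cost W B rest :=
          add_le_add (add_le_add le_rfl key) le_rfl
      _ = ((cost W u p1 + cost W A seg1) + cost W M seg2) + cost W B rest := by
          ring
  · simp only [hp1, hrest, List.length_append, List.length_cons, List.length_take,
      List.length_drop]
    omega

end Stmt1
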